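/- Let S₁, S₂ be symmetric 3×3 real matrices and k₁, k₂ ∈ ℝ³ with S₁k₁ = 0 and S₂k₂ = 0, and let B_{Sᵢ,kᵢ}(u,v) = Sᵢ(u×v) + kᵢ×(u×v) be the corresponding Lie brackets on ℝ³. An invertible matrix T ∈ GL(3,ℝ) satisfies T·B_{S₁,k₁}(u,v) = B_{S₂,k₂}(Tu,Tv) for all u,v ∈ ℝ³ (i.e., T is a Lie algebra isomorphism) if and only if S₂ = det(T)⁻¹·T S₁ Tᵀ and k₂ = (Tᵀ)⁻¹ k₁. -/

import Mathlib

open Matrix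

private def Cm (a : Fin 3 → ℝ) : Matrix (Fin 3) (Fin 3) ℝ :=
  !![0, -a 2, a 1; a 2, 0, -a 0; -a 1, a 0, 0]

lemma Cm_mulVec (a v : Fin 3 → ℝ) : (Cm a).mulVec v = crossProduct a v := by
  funext i
  fin_cases i <;>
    simp [Cm, mulVec, dotProduct, Fin.sum_univ_three, cross_apply] <;> ring

lemma Cm_transpose (a : Fin 3 → ℝ) : (Cm a)ᵀ = -Cm a := by
  ext i j
  fin_cases i <;> fin_cases j <;> simp [Cm]

lemma Cm_inj {a b : Fin 3 → ℝ} (h : Cm a = Cm b) : a = b := by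
  funext i
  fin_cases i
  · simpa [Cm] using congrFun (congrFun h 1) 2
  · simpa [Cm] using congrFun (congrFun h 0) 2
  · simpa [Cm] using congrFun (congrFun h 1) 0

lemma star_id (T : Matrix (Fin 3) (Fin 3) ℝ) (u v : Fin 3 → ℝ) :
    Tᵀ.mulVec (crossProduct (T.mulVec u) (T.mulVec v)) = T.det • crossProduct u v := by
  funext i
  fin_cases i <;>
    simp [mulVec, dotProduct, Fin.sum_univ_three, cross_apply, det_fin_three,
      transpose_apply] <;> ring

lemma ext_col {A B : Matrix (Fin 3) (Fin 3) ℝ}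
    (h : ∀ j, A.mulVec (Pi.single j 1) = B.mulVec (Pi.single j 1)) : A = B := by
  ext i j
  have := congrFun (h j) i
  simpa using this

lemma single_cross₀ : crossProduct (Pi.single 1 1 : Fin 3 → ℝ) (Pi.single 2 1)
    = Pi.single 0 1 := by
  funext i; fin_cases i <;> simp [cross_apply, Pi.single, Function.update]

lemma single_cross₁ : crossProduct (Pi.single 2 1 : Fin 3 → ℝ) (Pi.single 0 1)
    = Pi.single 1 1 := by
  funext i; fin_cases i <;> simp [cross_apply, Pi.single, Function.update]

lemma single_cross₂ : crossProduct (Pi.single 0 1 : Fin 3 → ℝ) (Pi.single 1 1)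
    = Pi.single 2 1 := by
  funext i; fin_cases i <;> simp [cross_apply, Pi.single, Function.update]

/-- matrix form of star_id -/
lemma starstar (T : Matrix (Fin 3) (Fin 3) ℝ) (a : Fin 3 → ℝ) :
    Tᵀ * Cm (T.mulVec a) * T = T.det • Cm a := by
  apply _root_.ext_col
  intro j
  rw [← mulVec_mulVec, ← mulVec_mulVec, Cm_mulVec, star_id, smul_mulVec, Cm_mulVec]


/-- For Lie brackets `B_{Sᵢ,kᵢ}(u,v) = Sᵢ(u×v) + kᵢ×(u×v)` on `ℝ³`
(with `Sᵢ` symmetric, `Sᵢkᵢ = 0`), an invertible matrix `T` is a Lie algebra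
isomorphism `T·B₁(u,v) = B₂(Tu,Tv)` if and only if `S₂ = det(T)⁻¹·T S₁ Tᵀ` and
`k₂ = (Tᵀ)⁻¹ k₁`. -/
theorem linear_poisson_isomorphism
    (S₁ S₂ : Matrix (Fin 3) (Fin 3) ℝ) (hS₁ : S₁.IsSymm) (hS₂ : S₂.IsSymm)
    (k₁ k₂ : Fin 3 → ℝ) (hk₁ : S₁.mulVec k₁ = 0) (hk₂ : S₂.mulVec k₂ = 0)
    (B₁ B₂ : (Fin 3 → ℝ) → (Fin 3 → ℝ) → (Fin 3 → ℝ))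
    (hB₁ : ∀ u v, B₁ u v = S₁.mulVec (crossProduct u v) + crossProduct k₁ (crossProduct u v))
    (hB₂ : ∀ u v, B₂ u v = S₂.mulVec (crossProduct u v) + crossProduct k₂ (crossProduct u v))
    (T : Matrix (Fin 3) (Fin 3) ℝ) (hT : IsUnit T.det) :
    (∀ u v, T.mulVec (B₁ u v) = B₂ (T.mulVec u) (T.mulVec v)) ↔
      (S₂ = (T.det)⁻¹ • (T * S₁ * Tᵀ) ∧ k₂ = (Tᵀ)⁻¹.mulVec k₁) := by
  set N := (Tᵀ)⁻¹ with hN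
  have hdet : T.det ≠ 0 := hT.ne_zero
  have hT' : IsUnit Tᵀ.det := by rwa [det_transpose]
  have hNT : N * Tᵀ = 1 := nonsing_inv_mul _ hT'
  have hTN : Tᵀ * N = 1 := mul_nonsing_inv _ hT'
  -- cross product transformation rule
  have cross_T : ∀ u v, crossProduct (T.mulVec u) (T.mulVec v)
      = T.det • N.mulVec (crossProduct u v) := by
    intro u v
    have h := congrArg N.mulVec (star_id T u v)
    rwa [mulVec_mulVec, hNT, one_mulVec, mulVec_smul] at h
  -- the matrix identity T * Cm k₁ * Tᵀ = det • Cm (N k₁)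
  have idC : T * Cm k₁ * Tᵀ = T.det • Cm (N.mulVec k₁) := by
    have h := starstar Tᵀ (N.mulVec k₁)
    rwa [mulVec_mulVec, hTN, one_mulVec, transpose_transpose, det_transpose] at h
  -- pointwise computation lemmas
  have eq1 : ∀ w : Fin 3 → ℝ, (T * (S₁ + Cm k₁)).mulVec w
      = T.mulVec (S₁.mulVec w + crossProduct k₁ w) := by
    intro w
    rw [← mulVec_mulVec, add_mulVec, Cm_mulVec]
  have eq2 : ∀ w : Fin 3 → ℝ, (T.det • ((S₂ + Cm k₂) * N)).mulVec w
      = S₂.mulVec (T.det • N.mulVec w) + crossProduct k₂ (T.det • N.mulVec w) := by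
    intro w
    simp only [← Cm_mulVec, mulVec_smul, smul_mulVec, ← mulVec_mulVec,
      add_mulVec, smul_add]
  -- main intermediate matrix equation
  have keyiff : (∀ u v, T.mulVec (B₁ u v) = B₂ (T.mulVec u) (T.mulVec v)) ↔
      T * (S₁ + Cm k₁) = T.det • ((S₂ + Cm k₂) * N) := by
    constructor
    · intro H
      have col : ∀ u v, (T * (S₁ + Cm k₁)).mulVec (crossProduct u v)
          = (T.det • ((S₂ + Cm k₂) * N)).mulVec (crossProduct u v) := by
        intro u v
        have h := H u v
        rw [hB₁, hB₂, cross_T] at h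
        rw [eq1, eq2]
        exact h
      apply _root_.ext_col
      intro j
      fin_cases j
      · have c := col (Pi.single 1 1) (Pi.single 2 1); rw [single_cross₀] at c; exact c
      · have c := col (Pi.single 2 1) (Pi.single 0 1); rw [single_cross₁] at c; exact c
      · have c := col (Pi.single 0 1) (Pi.single 1 1); rw [single_cross₂] at c; exact c
    · intro hM u v
      rw [hB₁, hB₂, cross_T, ← eq2, ← hM, eq1]
  rw [keyiff]
  constructor
  · intro hM
    have E : T * (S₁ + Cm k₁) * Tᵀ = T.det • (S₂ + Cm k₂) := by
      rw [hM, smul_mul_assoc, mul_assoc, hNT, mul_one]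
    rw [mul_add, add_mul, idC, smul_add] at E
    -- split into symmetric and antisymmetric parts
    set W := T * S₁ * Tᵀ - T.det • S₂ with hW
    have hWsymm : Wᵀ = W := by
      rw [hW, transpose_sub, transpose_smul, transpose_mul, transpose_mul,
        transpose_transpose, hS₂.eq, hS₁.eq, mul_assoc]
    have hWanti : W = T.det • Cm k₂ - T.det • Cm (N.mulVec k₁) := by
      rw [hW, sub_eq_sub_iff_add_eq_add, add_comm (T.det • Cm k₂) (T.det • S₂)]
      exact E
    have hWzero : W = 0 := by
      have h2 : Wᵀ = -W := by
        rw [hWanti, transpose_sub, transpose_smul, transpose_smul, Cm_transpose,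
          Cm_transpose, smul_neg, smul_neg, neg_sub]
        abel
      ext i j
      have h3 := congrFun (congrFun (hWsymm.symm.trans h2) i) j
      have h4 : W i j = -(W i j) := by simpa using h3
      simp only [Matrix.zero_apply]
      linarith
    constructor
    · have h1 : T * S₁ * Tᵀ = T.det • S₂ := sub_eq_zero.mp hWzero
      rw [h1, smul_smul, inv_mul_cancel₀ hdet, one_smul]
    · have h2 : T.det • Cm k₂ = T.det • Cm (N.mulVec k₁) :=
        sub_eq_zero.mp (hWanti.symm.trans hWzero)
      have h4 : Cm k₂ = Cm (N.mulVec k₁) := smul_right_injective _ hdet h2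
      exact Cm_inj h4
  · rintro ⟨hS, hk⟩
    have idC' : Cm (N.mulVec k₁) = (T.det)⁻¹ • (T * Cm k₁ * Tᵀ) := by
      rw [idC, smul_smul, inv_mul_cancel₀ hdet, one_smul]
    have hsum : S₂ + Cm k₂ = (T.det)⁻¹ • (T * (S₁ + Cm k₁) * Tᵀ) := by
      rw [hS, hk, mul_add, add_mul, smul_add, idC']
    rw [hsum, smul_mul_assoc, smul_smul, mul_inv_cancel₀ hdet, one_smul,
      mul_assoc, hTN, mul_one]
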